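/- Let X be a compact Hausdorff space and let A be a closed subalgebra of C(X,ℂ) containing the constants and separating the points of X. Suppose that the maximal ideal space of A is X, i.e., every nonzero continuous ℂ-algebra homomorphism A → ℂ is given by evaluation at some point of X. Then for every point p ∈ X and every open neighborhood U of p there exists a closed set V ⊆ U that is a neighborhood of p such that every nonzero continuous ℂ-algebra homomorphism from the closure in C(V,ℂ) of { f|_V : f ∈ A } to ℂ is given by evaluation at some point of V. -/

import Mathlib

/-- Restriction to a subset, as an algebra homomorphism `C(X, ℂ) →ₐ[ℂ] C(V, ℂ)`. -/
noncomputable def restrictHom {X : Type*} [TopologicalSpace X] (V : Set X) :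
    C(X, ℂ) →ₐ[ℂ] C(V, ℂ) where
  toFun f := f.restrict V
  map_one' := rfl
  map_mul' _ _ := rfl
  map_zero' := rfl
  map_add' _ _ := rfl
  commutes' _ := rfl

lemma char_norm_le {B : Type*} [NormedRing B] [NormedAlgebra ℂ B] [CompleteSpace B]
    [NormOneClass B] (ψ : B →ₐ[ℂ] ℂ) (b : B) : ‖ψ b‖ ≤ ‖b‖ :=
  spectrum.norm_le_norm_of_mem (AlgHom.apply_mem_spectrum ψ b)

theorem stmt17 {X : Type*} [TopologicalSpace X] [CompactSpace X] [T2Space X]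
    (A : Subalgebra ℂ C(X, ℂ)) (hAcl : IsClosed (A : Set C(X, ℂ)))
    (hsep : ∀ x y : X, x ≠ y → ∃ f ∈ A, f x ≠ f y)
    (hmax : ∀ φ : A →ₐ[ℂ] ℂ, Continuous φ → ∃ x : X, ∀ f : A, φ f = (f : C(X, ℂ)) x)
    (p : X) (U : Set X) (hU : IsOpen U) (hpU : p ∈ U) :
    ∃ V : Set X, ∃ hVcl : IsClosed V, V ⊆ U ∧ V ∈ nhds p ∧
      haveI : CompactSpace V := isCompact_iff_compactSpace.mp hVcl.isCompact
      ∀ ψ : (A.map (restrictHom V)).topologicalClosure →ₐ[ℂ] ℂ, Continuous ψ →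
        ∃ v : V, ∀ f : (A.map (restrictHom V)).topologicalClosure,
          ψ f = (f : C(V, ℂ)) v := by
  classical
  have key : ∀ y : X, ∃ g : C(X, ℂ), g ∈ A ∧ g p = 0 ∧ (y ∉ U → g y ≠ 0) := by
    intro y
    by_cases hy : y ∈ U
    · exact ⟨0, A.zero_mem, rfl, fun h => absurd hy h⟩
    · obtain ⟨f, hfA, hf⟩ := hsep y p (by rintro rfl; exact hy hpU)
      refine ⟨f - algebraMap ℂ C(X, ℂ) (f p), sub_mem hfA (A.algebraMap_mem _), by simp, ?_⟩
      intro _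
      simpa [sub_ne_zero] using hf
  choose g hgA hgp hgy using key
  set c : X → ℝ := fun y => ‖g y y‖ / 2 with hc
  have hUc : IsCompact Uᶜ := hU.isClosed_compl.isCompact
  have hcov : Uᶜ ⊆ ⋃ y ∈ Uᶜ, {x | c y < ‖g y x‖} := by
    intro y hy
    exact Set.mem_biUnion hy (half_lt_self (norm_pos_iff.mpr (hgy y hy)))
  obtain ⟨t, htU, htfin, htcov⟩ := hUc.elim_finite_subcover_image
    (fun y _ => isOpen_lt continuous_const (g y).continuous.norm) hcov
  set V : Set X := ⋂ y ∈ t, {x | ‖g y x‖ ≤ c y} with hV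
  have hVcl : IsClosed V :=
    isClosed_biInter fun y _ => isClosed_le (g y).continuous.norm continuous_const
  have hcpos : ∀ y ∈ t, 0 < c y := fun y hy => half_pos (norm_pos_iff.mpr (hgy y (htU hy)))
  have hVU : V ⊆ U := by
    intro x hx
    by_contra hxU
    obtain ⟨y, hyt, hyx⟩ := Set.mem_iUnion₂.mp (htcov hxU)
    have h1 : ‖g y x‖ ≤ c y := Set.mem_iInter₂.mp hx y hyt
    have h2 : c y < ‖g y x‖ := hyx
    exact absurd h1 (not_le.mpr h2)
  have hVnhds : V ∈ nhds p := by
    have hopen : IsOpen (⋂ y ∈ t, {x | ‖g y x‖ < c y}) :=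
      htfin.isOpen_biInter fun y _ => isOpen_lt (g y).continuous.norm continuous_const
    have hpW : p ∈ ⋂ y ∈ t, {x | ‖g y x‖ < c y} := by
      refine Set.mem_iInter₂.mpr fun y hy => ?_
      simpa [hgp y] using hcpos y hy
    refine Filter.mem_of_superset (hopen.mem_nhds hpW) ?_
    exact Set.iInter₂_mono fun y hy => fun x hx => show ‖g y x‖ ≤ c y from le_of_lt hx
  have hpV : p ∈ V := by
    refine Set.mem_iInter₂.mpr fun y hy => ?_
    simp [hgp y, le_of_lt (hcpos y hy)]
  haveI : CompactSpace V := isCompact_iff_compactSpace.mp hVcl.isCompact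
  haveI : Nonempty V := ⟨⟨p, hpV⟩⟩
  refine ⟨V, hVcl, hVU, hVnhds, ?_⟩
  intro ψ hψ
  haveI : CompleteSpace ((A.map (restrictHom V)).topologicalClosure) :=
    IsClosed.completeSpace_coe (hs := Subalgebra.isClosed_topologicalClosure _)
  haveI : NormOneClass ((A.map (restrictHom V)).topologicalClosure) := ⟨by
    change ‖(1 : C(V, ℂ))‖ = 1
    exact norm_one⟩
  -- the restriction map A → B
  have hmem : ∀ a : A, restrictHom V (a : C(X, ℂ)) ∈ (A.map (restrictHom V)).topologicalClosure :=
    fun a => (A.map (restrictHom V)).le_topologicalClosure ⟨a, a.2, rfl⟩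
  let ρ : A →ₐ[ℂ] ((A.map (restrictHom V)).topologicalClosure) :=
    ((restrictHom V).comp A.val).codRestrict _ (fun a => hmem a)
  have hρcont : Continuous ρ := by
    apply Continuous.subtype_mk
    exact (ContinuousMap.continuous_precomp ⟨(Subtype.val : V → X), continuous_subtype_val⟩).comp
      continuous_subtype_val
  have hφc : Continuous (ψ.comp ρ) := by
    rw [AlgHom.coe_comp]
    exact hψ.comp hρcont
  obtain ⟨x, hx⟩ := hmax (ψ.comp ρ) hφc
  -- x ∈ V
  have hxV : x ∈ V := by
    refine Set.mem_iInter₂.mpr fun y hy => ?_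
    have h1 : ‖g y x‖ = ‖ψ (ρ ⟨g y, hgA y⟩)‖ := by
      rw [← hx ⟨g y, hgA y⟩]; rfl
    have h2 : ‖ψ (ρ ⟨g y, hgA y⟩)‖ ≤ ‖ρ ⟨g y, hgA y⟩‖ := char_norm_le ψ _
    have h3 : ‖ρ ⟨g y, hgA y⟩‖ ≤ c y := by
      change ‖(g y).restrict V‖ ≤ c y
      rw [ContinuousMap.norm_le _ (le_of_lt (hcpos y hy))]
      intro v
      exact Set.mem_iInter₂.mp v.2 y hy
    calc ‖g y x‖ = ‖ψ (ρ ⟨g y, hgA y⟩)‖ := h1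
      _ ≤ ‖ρ ⟨g y, hgA y⟩‖ := h2
      _ ≤ c y := h3
  refine ⟨⟨x, hxV⟩, ?_⟩
  intro f
  -- f.1 is in the closure of the restricted algebra; approximate by a sequence
  have hf : (f : C(V, ℂ)) ∈ closure ((A.map (restrictHom V)) : Set C(V, ℂ)) := f.2
  obtain ⟨u, hu, hulim⟩ := mem_closure_iff_seq_limit.mp hf
  -- each u n lifts to B
  have humem : ∀ n, u n ∈ (A.map (restrictHom V)).topologicalClosure := fun n => (A.map (restrictHom V)).le_topologicalClosure (hu n)
  set b : ℕ → ((A.map (restrictHom V)).topologicalClosure) := fun n => ⟨u n, humem n⟩ with hb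
  have hblim : Filter.Tendsto b Filter.atTop (nhds f) := by
    rw [tendsto_subtype_rng]
    exact hulim
  have hψb : ∀ n, ψ (b n) = u n ⟨x, hxV⟩ := by
    intro n
    obtain ⟨a, haA, hau⟩ := hu n
    have hbn : b n = ρ ⟨a, haA⟩ := Subtype.ext (by simp [hb, ρ, ← hau]; rfl)
    calc ψ (b n) = (ψ.comp ρ) ⟨a, haA⟩ := by rw [hbn]; rfl
      _ = (⟨a, haA⟩ : A).1 x := hx ⟨a, haA⟩
      _ = u n ⟨x, hxV⟩ := by rw [← hau]; rfl
  have lim1 : Filter.Tendsto (fun n => ψ (b n)) Filter.atTop (nhds (ψ f)) :=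
    (hψ.tendsto f).comp hblim
  have lim2 : Filter.Tendsto (fun n => ψ (b n)) Filter.atTop
      (nhds ((f : C(V, ℂ)) ⟨x, hxV⟩)) := by
    have : Filter.Tendsto (fun n => (u n) ⟨x, hxV⟩) Filter.atTop
        (nhds ((f : C(V, ℂ)) ⟨x, hxV⟩)) :=
      ((ContinuousEvalConst.continuous_eval_const (⟨x, hxV⟩ : V)).tendsto _).comp hulim
    simpa [hψb] using this
  exact tendsto_nhds_unique lim1 lim2
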